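/- Let X ∈ ℝ^{n×d}, y ∈ ℝⁿ be such that there exists β* ∈ ℝ^d with Xβ* = y, and let L(β) = (1/(4n))·‖Xβ − y‖₂². Let Ψ : ℝ^d → ℝ be twice continuously differentiable and μ-strongly convex for some μ > 0. Let β : [0,∞) → ℝ^d be continuous with β(0) = β₀, such that t ↦ ∇Ψ(β(t)) is differentiable with derivative (d/dt)∇Ψ(β(t)) = −∇L(β(t)) for all t ≥ 0. Then there exists β_∞ ∈ ℝ^d such that β(t) → β_∞ as t → ∞, Xβ_∞ = y, and for every β ∈ ℝ^d with Xβ = y one has D_Ψ(β_∞, β₀) ≤ D_Ψ(β, β₀). -/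

import Mathlib

open Set Filter Topology

local notation "⟪" x ", " y "⟫" => (inner ℝ x y : ℝ)

variable {E : Type*} [NormedAddCommGroup E] [InnerProductSpace ℝ E] [CompleteSpace E]

lemma convexOn_grad_ineq {f : E → ℝ} {f' : E → E}
    (hf : ConvexOn ℝ Set.univ f) (hd : ∀ x, HasGradientAt f (f' x) x) (x a : E) :
    f x + ⟪f' x, a - x⟫ ≤ f a := by
  have hφeq : (fun τ : ℝ => f (x + τ • (a - x))) = f ∘ (AffineMap.lineMap x a : ℝ →ᵃ[ℝ] E) := by
    funext τ
    simp [AffineMap.lineMap_apply, add_comm]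
  have hconv : ConvexOn ℝ Set.univ (fun τ : ℝ => f (x + τ • (a - x))) := by
    have h := hf.comp_affineMap (AffineMap.lineMap x a : ℝ →ᵃ[ℝ] E)
    rw [hφeq]
    simpa using h
  have hc : HasDerivAt (fun τ : ℝ => x + τ • (a - x)) (a - x) (0 : ℝ) := by
    simpa using ((hasDerivAt_id (0:ℝ)).smul_const (a - x)).const_add x
  have hd0 : HasDerivAt (fun τ : ℝ => f (x + τ • (a - x))) ⟪f' x, a - x⟫ 0 := by
    have hF : HasFDerivAt f ((InnerProductSpace.toDual ℝ E) (f' x))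
        ((fun τ : ℝ => x + τ • (a - x)) 0) := by
      simpa using (hasGradientAt_iff_hasFDerivAt.mp (hd x))
    have := hF.comp_hasDerivAt (0:ℝ) hc
    simp [Function.comp, InnerProductSpace.toDual_apply_apply] at this; exact this
  have hs := hconv.le_slope_of_hasDerivAt (mem_univ (0:ℝ)) (mem_univ (1:ℝ)) one_pos hd0
  rw [slope_def_field] at hs
  simp at hs
  linarith [hs]

lemma hasGradientAt_const_mul_normsq (c : ℝ) (x : E) :
    HasGradientAt (fun b : E => c * ‖b‖ ^ 2) ((2 * c) • x) x := by
  rw [hasGradientAt_iff_hasFDerivAt]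
  have h1 := (hasFDerivAt_id x).inner ℝ (hasFDerivAt_id x)
  have h2 := h1.const_mul c
  have heq : (fun b : E => c * ⟪b, b⟫) = fun b : E => c * ‖b‖ ^ 2 := by
    funext b; rw [real_inner_self_eq_norm_sq]
  simp only [id_eq] at h2
  rw [heq] at h2
  convert h2 using 1
  case e'_9 => rfl
  case e'_12 =>
  ext v
  simp [real_inner_smul_left, real_inner_comm, InnerProductSpace.toDual_apply_apply]
  ring

lemma hasDerivWithinAt_of_squeeze {R S : ℝ → ℝ} {s : Set ℝ} {t : ℝ}
    (hS : HasDerivWithinAt S 0 s t) (hRt : R t = 0) (hSt : S t = 0)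
    (h0 : ∀ u, 0 ≤ R u) (hle : ∀ u, R u ≤ S u) : HasDerivWithinAt R 0 s t := by
  rw [hasDerivWithinAt_iff_isLittleO] at hS ⊢
  simp only [hRt, hSt, smul_zero, sub_zero] at hS ⊢
  refine (Asymptotics.isBigO_of_le _ fun u => ?_).trans_isLittleO hS
  rw [Real.norm_eq_abs, Real.norm_eq_abs, abs_of_nonneg (h0 u),
    abs_of_nonneg ((h0 u).trans (hle u))]
  exact hle u

set_option maxHeartbeats 4000000 in
theorem stmt_12 {n d : ℕ} (hn : 0 < n) (X : Matrix (Fin n) (Fin d) ℝ) (y : Fin n → ℝ)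
    (hexists : ∃ βs : Fin d → ℝ, X.mulVec βs = y)
    (L : EuclideanSpace ℝ (Fin d) → ℝ)
    (hLdef : ∀ b, L b = (1 / (4 * (n : ℝ))) * ∑ i, (X.mulVec b i - y i) ^ 2)
    (Ψ : EuclideanSpace ℝ (Fin d) → ℝ) (hΨ : ContDiff ℝ 2 Ψ)
    (μ : ℝ) (hμ : 0 < μ)
    (hstrong : ConvexOn ℝ Set.univ (fun b => Ψ b - (μ / 2) * ‖b‖ ^ 2))
    (β : ℝ → EuclideanSpace ℝ (Fin d)) (β₀ : EuclideanSpace ℝ (Fin d))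
    (hβ0 : β 0 = β₀) (hcont : ContinuousOn β (Set.Ici 0))
    (hflow : ∀ t ∈ Set.Ici (0 : ℝ),
      HasDerivWithinAt (fun s => gradient Ψ (β s)) (-(gradient L (β t))) (Set.Ici 0) t) :
    ∃ βinf : EuclideanSpace ℝ (Fin d),
      Filter.Tendsto β Filter.atTop (nhds βinf) ∧ X.mulVec βinf = y ∧
      ∀ b : EuclideanSpace ℝ (Fin d), X.mulVec b = y →
        Ψ βinf - Ψ β₀ - (inner ℝ (gradient Ψ β₀) (βinf - β₀) : ℝ) ≤
          Ψ b - Ψ β₀ - (inner ℝ (gradient Ψ β₀) (b - β₀) : ℝ) := by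
  -- basic differentiability facts for Ψ
  have hΨ1 : ContDiff ℝ 1 Ψ := hΨ.of_le (by norm_num)
  have hΨd : Differentiable ℝ Ψ := hΨ1.differentiable one_ne_zero
  have hgradΨ : ∀ x : EuclideanSpace ℝ (Fin d), HasGradientAt Ψ (gradient Ψ x) x := fun x => (hΨd x).hasGradientAt
  have hgcont : Continuous (fun x : EuclideanSpace ℝ (Fin d) => gradient Ψ x) := by
    have h1 : Continuous (fderiv ℝ Ψ) := hΨ1.continuous_fderiv one_ne_zero
    exact (InnerProductSpace.toDual ℝ (EuclideanSpace ℝ (Fin d))).symm.continuous.comp h1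
  -- convexity of Ψ
  have hnormsq : ConvexOn ℝ Set.univ (fun b : EuclideanSpace ℝ (Fin d) => (μ/2) * ‖b‖ ^ 2) := by
    refine ⟨convex_univ, fun x _ z _ a b ha hb hab => ?_⟩
    have h1 : ‖a • x + b • z‖ ≤ a * ‖x‖ + b * ‖z‖ := by
      refine (norm_add_le _ _).trans ?_
      rw [norm_smul, norm_smul, Real.norm_eq_abs, Real.norm_eq_abs,
        abs_of_nonneg ha, abs_of_nonneg hb]
    have h2 : ‖a • x + b • z‖ ^ 2 ≤ (a * ‖x‖ + b * ‖z‖) ^ 2 := by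
      have := norm_nonneg (a • x + b • z)
      nlinarith
    have h3 : (a * ‖x‖ + b * ‖z‖) ^ 2 ≤ a * ‖x‖ ^ 2 + b * ‖z‖ ^ 2 := by
      nlinarith [sq_nonneg (‖x‖ - ‖z‖), mul_nonneg ha hb]
    have h4 := mul_le_mul_of_nonneg_left (h2.trans h3) (le_of_lt (half_pos hμ))
    simp only [smul_eq_mul]
    nlinarith [h4]
  have hΨconv : ConvexOn ℝ Set.univ Ψ := by
    have h := hstrong.add hnormsq
    have heq : ((fun b : EuclideanSpace ℝ (Fin d) => Ψ b - (μ/2) * ‖b‖ ^ 2) + (fun b : EuclideanSpace ℝ (Fin d) => (μ/2) * ‖b‖ ^ 2)) = Ψ := by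
      funext b; simp
    rwa [heq] at h
  have hbreg : ∀ x a : EuclideanSpace ℝ (Fin d), Ψ x + ⟪gradient Ψ x, a - x⟫ ≤ Ψ a :=
    convexOn_grad_ineq hΨconv hgradΨ
  -- strong convexity inequality
  have hφgrad : ∀ x : EuclideanSpace ℝ (Fin d), HasGradientAt (fun b : EuclideanSpace ℝ (Fin d) => Ψ b - (μ/2) * ‖b‖ ^ 2)
      (gradient Ψ x - μ • x) x := by
    intro x
    have h2 := hasGradientAt_const_mul_normsq (μ/2) x
    have h3 : (2 * (μ/2)) • x = μ • x := by rw [show 2 * (μ/2) = μ by ring]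
    rw [h3] at h2
    rw [hasGradientAt_iff_hasFDerivAt] at h2 ⊢
    have h4 := (hasGradientAt_iff_hasFDerivAt.mp (hgradΨ x)).sub h2
    rwa [← map_sub] at h4
  have hstrongineq : ∀ x a : EuclideanSpace ℝ (Fin d), Ψ x + ⟪gradient Ψ x, a - x⟫ + μ/2 * ‖a - x‖ ^ 2 ≤ Ψ a := by
    intro x a
    have h := convexOn_grad_ineq hstrong hφgrad x a
    have hnorm : ‖a - x‖ ^ 2 = ‖a‖ ^ 2 - 2 * ⟪a, x⟫ + ‖x‖ ^ 2 := norm_sub_sq_real a x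
    have hin : ⟪gradient Ψ x - μ • x, a - x⟫
        = ⟪gradient Ψ x, a - x⟫ - μ * (⟪a, x⟫ - ‖x‖ ^ 2) := by
      simp only [inner_sub_left, inner_sub_right, real_inner_smul_left,
        real_inner_self_eq_norm_sq, real_inner_comm x a]
      ring
    rw [hin] at h
    nlinarith [h, hnorm]
  have hmono : ∀ u v : EuclideanSpace ℝ (Fin d), μ * ‖u - v‖ ^ 2 ≤ ⟪gradient Ψ u - gradient Ψ v, u - v⟫ := by
    intro u v
    have h1 := hstrongineq u v
    have h2 := hstrongineq v u
    have e1 : ⟪gradient Ψ u, v - u⟫ = -⟪gradient Ψ u, u - v⟫ := by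
      rw [← inner_neg_right]; rw [neg_sub]
    have e2 : ‖v - u‖ = ‖u - v‖ := norm_sub_rev v u
    have e3 : ⟪gradient Ψ u - gradient Ψ v, u - v⟫
        = ⟪gradient Ψ u, u - v⟫ - ⟪gradient Ψ v, u - v⟫ := inner_sub_left _ _ _
    rw [e1, e2] at h1
    linarith [h1, h2]
  have hlip : ∀ u v : EuclideanSpace ℝ (Fin d), ‖u - v‖ ≤ ‖gradient Ψ u - gradient Ψ v‖ / μ := by
    intro u v
    by_cases h : u = v
    · simp [h]
    · have hpos : 0 < ‖u - v‖ := by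
        rw [norm_pos_iff]; exact sub_ne_zero_of_ne h
      rw [le_div_iff₀ hμ]
      have hb := hmono u v
      have hcs := real_inner_le_norm (gradient Ψ u - gradient Ψ v) (u - v)
      nlinarith
  -- linear map facts for L
  have hnpos : (0:ℝ) < (n:ℝ) := by exact_mod_cast hn
  let T : EuclideanSpace ℝ (Fin d) →ₗ[ℝ] EuclideanSpace ℝ (Fin n) :=
    { toFun := fun b => WithLp.toLp 2 (X.mulVec b)
      map_add' := fun a b => by simp [Matrix.mulVec_add]
      map_smul' := fun c a => by simp [Matrix.mulVec_smul] }
  let F : EuclideanSpace ℝ (Fin d) →L[ℝ] EuclideanSpace ℝ (Fin n) := LinearMap.toContinuousLinearMap T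
  let yE : EuclideanSpace ℝ (Fin n) := (EuclideanSpace.equiv (Fin n) ℝ).symm y
  have hFapply : ∀ (b : EuclideanSpace ℝ (Fin d)) (i : Fin n), F b i = X.mulVec b i := fun b i => rfl
  have hyE : ∀ i, yE i = y i := fun i => rfl
  have hInner : ∀ u v : EuclideanSpace ℝ (Fin n), ⟪u, v⟫ = ∑ i, u i * v i := by
    intro u v
    simp [PiLp.inner_apply, RCLike.inner_apply, mul_comm]
  have hsub : ∀ (u v : EuclideanSpace ℝ (Fin n)) (i : Fin n), (u - v) i = u i - v i := fun u v i => rfl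
  have hL' : ∀ b : EuclideanSpace ℝ (Fin d), L b = (1 / (4 * (n:ℝ))) * ⟪F b - yE, F b - yE⟫ := by
    intro b
    rw [hLdef, hInner]
    congr 1
    refine Finset.sum_congr rfl fun i _ => ?_
    rw [hsub, hFapply, hyE]
    ring
  have hgradL : ∀ x v : EuclideanSpace ℝ (Fin d), ⟪gradient L x, v⟫
      = (1 / (2 * (n:ℝ))) * ∑ i, (X.mulVec x i - y i) * (X.mulVec v i) := by
    intro x v
    have hG : HasFDerivAt (fun b : EuclideanSpace ℝ (Fin d) => F b - yE) (F : EuclideanSpace ℝ (Fin d) →L[ℝ] EuclideanSpace ℝ (Fin n)) x :=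
      F.hasFDerivAt.sub_const yE
    have h1 := hG.inner ℝ hG
    have h2 := h1.const_mul (1 / (4 * (n:ℝ)))
    have h3 : HasFDerivAt L ((1 / (4 * (n:ℝ))) •
        ((fderivInnerCLM ℝ (F x - yE, F x - yE)).comp
          ((F : EuclideanSpace ℝ (Fin d) →L[ℝ] EuclideanSpace ℝ (Fin n)).prod (F : EuclideanSpace ℝ (Fin d) →L[ℝ] EuclideanSpace ℝ (Fin n))))) x := by
      refine h2.congr_of_eventuallyEq (Filter.Eventually.of_forall fun b => ?_)
      rw [hL' b]
    have h4 : gradient L x = (InnerProductSpace.toDual ℝ (EuclideanSpace ℝ (Fin d))).symm (fderiv ℝ L x) := rfl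
    rw [h4, InnerProductSpace.toDual_symm_apply, h3.fderiv]
    have h5 : ((1 / (4 * (n:ℝ))) • ((fderivInnerCLM ℝ (F x - yE, F x - yE)).comp
        ((F : EuclideanSpace ℝ (Fin d) →L[ℝ] EuclideanSpace ℝ (Fin n)).prod (F : EuclideanSpace ℝ (Fin d) →L[ℝ] EuclideanSpace ℝ (Fin n))))) v
        = (1 / (4 * (n:ℝ))) * (⟪F x - yE, F v⟫ + ⟪F v, F x - yE⟫) := by
      simp [fderivInnerCLM_apply]
    rw [h5]
    have h7 : ⟪F v, F x - yE⟫ = ⟪F x - yE, F v⟫ := real_inner_comm _ _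
    rw [h7, hInner]
    have h6 : ∀ i : Fin n, (F x - yE) i * (F v) i = (X.mulVec x i - y i) * (X.mulVec v i) := by
      intro i; rw [hsub, hFapply, hFapply, hyE]
    rw [Finset.sum_congr rfl fun i _ => h6 i]
    ring
  have hLnonneg : ∀ x : EuclideanSpace ℝ (Fin d), 0 ≤ L x := by
    intro x; rw [hLdef]; positivity
  have hLcont : Continuous L := by
    have : L = fun b : EuclideanSpace ℝ (Fin d) => (1 / (4 * (n:ℝ))) * ⟪F b - yE, F b - yE⟫ := funext hL'
    rw [this]
    exact continuous_const.mul ((F.continuous.sub continuous_const).inner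
      (F.continuous.sub continuous_const))
  have hLsolval : ∀ b : EuclideanSpace ℝ (Fin d), X.mulVec b = y → ∀ x : EuclideanSpace ℝ (Fin d), ⟪gradient L x, b - x⟫ = -(2 * L x) := by
    intro b hb x
    rw [hgradL, hLdef]
    have h1 : ∀ i : Fin n, X.mulVec (WithLp.ofLp (b - x)) i = -(X.mulVec x i - y i) := by
      intro i
      have h2 : F (b - x) = F b - F x := map_sub F b x
      have h3 : X.mulVec (WithLp.ofLp (b - x)) i = F (b - x) i := (hFapply _ i).symm
      rw [h3, h2, hsub, hFapply, hFapply, hb]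
      ring
    rw [Finset.sum_congr rfl fun i _ => by rw [h1 i]]
    rw [show ∑ i, (X.mulVec x i - y i) * -(X.mulVec x i - y i)
        = -∑ i, (X.mulVec x i - y i) ^ 2 by
      rw [← Finset.sum_neg_distrib]; exact Finset.sum_congr rfl fun i _ => by ring]
    ring
  have hLker : ∀ v : EuclideanSpace ℝ (Fin d), X.mulVec v = 0 → ∀ x : EuclideanSpace ℝ (Fin d), ⟪gradient L x, v⟫ = 0 := by
    intro v hv x
    rw [hgradL, hv]
    simp
  -- derivative of the Bregman-type Lyapunov function
  have hPhiDeriv : ∀ b : EuclideanSpace ℝ (Fin d), ∀ t ∈ Set.Ici (0:ℝ),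
      HasDerivWithinAt (fun s => Ψ b - Ψ (β s) - ⟪gradient Ψ (β s), b - β s⟫)
        (⟪gradient L (β t), b - β t⟫) (Set.Ici 0) t := by
    intro b t ht
    have hgt := hflow t ht
    have hId : ∀ s : ℝ, Ψ b - Ψ (β s) - ⟪gradient Ψ (β s), b - β s⟫ =
        ((Ψ b - Ψ (β t) - ⟪gradient Ψ (β t), b - β t⟫)
          + ⟪gradient Ψ (β s) - gradient Ψ (β t), β t - b⟫)
        + (Ψ (β t) - Ψ (β s) - ⟪gradient Ψ (β s), β t - β s⟫) := by
      intro s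
      simp only [inner_sub_left, inner_sub_right]
      ring
    have h2 : HasDerivWithinAt (fun s => gradient Ψ (β s) - gradient Ψ (β t))
        (-(gradient L (β t))) (Set.Ici 0) t := hgt.sub_const _
    have h1 : HasDerivWithinAt
        (fun s => (Ψ b - Ψ (β t) - ⟪gradient Ψ (β t), b - β t⟫)
          + ⟪gradient Ψ (β s) - gradient Ψ (β t), β t - b⟫)
        ⟪-(gradient L (β t)), β t - b⟫ (Set.Ici 0) t := by
      have h3 := h2.inner ℝ (hasDerivWithinAt_const t (Set.Ici (0:ℝ)) (β t - b))
      have h4 : HasDerivWithinAt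
          (fun s => ⟪gradient Ψ (β s) - gradient Ψ (β t), β t - b⟫)
          ⟪-(gradient L (β t)), β t - b⟫ (Set.Ici 0) t := by
        simpa using h3
      exact h4.const_add _
    have hR : HasDerivWithinAt
        (fun s => Ψ (β t) - Ψ (β s) - ⟪gradient Ψ (β s), β t - β s⟫) 0 (Set.Ici 0) t := by
      apply hasDerivWithinAt_of_squeeze
        (S := fun s => (1/μ) * ⟪gradient Ψ (β s) - gradient Ψ (β t),
          gradient Ψ (β s) - gradient Ψ (β t)⟫)
      · have h3 := (h2.inner ℝ h2).const_mul (1/μ)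
        simpa using h3
      · simp
      · simp
      · intro s
        have := hbreg (β s) (β t)
        linarith
      · intro s
        have hD2 := hbreg (β t) (β s)
        have hsum : (Ψ (β t) - Ψ (β s) - ⟪gradient Ψ (β s), β t - β s⟫)
            + (Ψ (β s) - Ψ (β t) - ⟪gradient Ψ (β t), β s - β t⟫)
            = ⟪gradient Ψ (β s) - gradient Ψ (β t), β s - β t⟫ := by
          simp only [inner_sub_left, inner_sub_right]
          ring
        have hcs := real_inner_le_norm (gradient Ψ (β s) - gradient Ψ (β t)) (β s - β t)
        have hl := hlip (β s) (β t)
        have hSval : (1/μ) * ⟪gradient Ψ (β s) - gradient Ψ (β t),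
            gradient Ψ (β s) - gradient Ψ (β t)⟫
            = (1/μ) * ‖gradient Ψ (β s) - gradient Ψ (β t)‖^2 := by
          rw [real_inner_self_eq_norm_sq]
        rw [hSval]
        have hnn : (0:ℝ) ≤ ‖gradient Ψ (β s) - gradient Ψ (β t)‖ := norm_nonneg _
        have h5 := mul_le_mul_of_nonneg_left hl hnn
        have heq2 : ‖gradient Ψ (β s) - gradient Ψ (β t)‖
            * (‖gradient Ψ (β s) - gradient Ψ (β t)‖ / μ)
            = (1/μ) * ‖gradient Ψ (β s) - gradient Ψ (β t)‖^2 := by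
          ring
        linarith
    have hfinal := h1.add hR
    have hval : ⟪-(gradient L (β t)), β t - b⟫ + 0 = ⟪gradient L (β t), b - β t⟫ := by
      simp only [add_zero, inner_neg_left, inner_sub_right]
      ring
    rw [hval] at hfinal
    exact hfinal.congr (fun s _ => hId s) (hId t)
  -- continuity and monotonicity of the Lyapunov functions
  have hPhiCont : ∀ b : EuclideanSpace ℝ (Fin d),
      ContinuousOn (fun s => Ψ b - Ψ (β s) - ⟪gradient Ψ (β s), b - β s⟫) (Set.Ici 0) := by
    intro b
    refine ContinuousOn.sub (ContinuousOn.sub continuousOn_const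
      ((hΨ1.continuous).comp_continuousOn hcont)) ?_
    exact ContinuousOn.inner (hgcont.comp_continuousOn hcont) (continuousOn_const.sub hcont)
  have hPhiMono : ∀ b : EuclideanSpace ℝ (Fin d), X.mulVec b = y →
      AntitoneOn (fun s => Ψ b - Ψ (β s) - ⟪gradient Ψ (β s), b - β s⟫) (Set.Ici 0) := by
    intro b hb
    refine antitoneOn_of_hasDerivWithinAt_nonpos (convex_Ici 0) (hPhiCont b)
      (f' := fun t => ⟪gradient L (β t), b - β t⟫) ?_ ?_
    · intro x hx
      have hx' : x ∈ Set.Ici (0:ℝ) := interior_subset hx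
      exact (hPhiDeriv b x hx').mono interior_subset
    · intro x hx
      show ⟪gradient L (β x), b - β x⟫ ≤ 0
      rw [hLsolval b hb (β x)]
      have := hLnonneg (β x)
      linarith
  -- the interpolating point
  obtain ⟨bs, hbs⟩ := hexists
  set bstar : EuclideanSpace ℝ (Fin d) := (EuclideanSpace.equiv (Fin d) ℝ).symm bs with hbstar
  have hbs' : X.mulVec bstar = y := hbs
  -- L (β t) gets arbitrarily small
  have hsmall : ∀ ε : ℝ, 0 < ε → ∀ T : ℝ, 0 ≤ T → ∃ t, T ≤ t ∧ L (β t) < ε := by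
    intro ε hε T hT
    by_contra hcon
    push_neg at hcon
    have hmono2 : AntitoneOn (fun s =>
        (Ψ bstar - Ψ (β s) - ⟪gradient Ψ (β s), bstar - β s⟫) + 2*ε*s) (Set.Ici T) := by
      refine antitoneOn_of_hasDerivWithinAt_nonpos (convex_Ici T)
        (f' := fun x => ⟪gradient L (β x), bstar - β x⟫ + 2*ε) ?_ ?_ ?_
      · refine ContinuousOn.add ((hPhiCont bstar).mono ?_) ?_
        · exact fun x hx => le_trans hT hx
        · exact (continuous_const.mul continuous_id).continuousOn
      · intro x hx
        rw [interior_Ici] at hx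
        have hx0 : x ∈ Set.Ici (0:ℝ) := le_trans hT (le_of_lt hx)
        refine HasDerivWithinAt.add ((hPhiDeriv bstar x hx0).mono ?_) ?_
        · rw [interior_Ici]
          exact fun z hz => le_trans hT (le_of_lt hz)
        · simpa using ((hasDerivAt_id x).const_mul (2*ε)).hasDerivWithinAt
      · intro x hx
        rw [interior_Ici] at hx
        show ⟪gradient L (β x), bstar - β x⟫ + 2*ε ≤ 0
        rw [hLsolval bstar hbs' (β x)]
        have := hcon x (le_of_lt hx)
        linarith
    have hΦ0 : ∀ s : ℝ, 0 ≤ Ψ bstar - Ψ (β s) - ⟪gradient Ψ (β s), bstar - β s⟫ := by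
      intro s
      have := hbreg (β s) bstar
      linarith
    obtain ⟨t', ht'1, ht'2⟩ : ∃ t', T ≤ t' ∧ 2*ε*t'
        = 2*ε*T + ((Ψ bstar - Ψ (β T) - ⟪gradient Ψ (β T), bstar - β T⟫) + 1) := by
      refine ⟨T + ((Ψ bstar - Ψ (β T) - ⟪gradient Ψ (β T), bstar - β T⟫) + 1)/(2*ε), ?_, ?_⟩
      · have h9 : 0 ≤ ((Ψ bstar - Ψ (β T) - ⟪gradient Ψ (β T), bstar - β T⟫) + 1)/(2*ε) :=
          div_nonneg (by linarith [hΦ0 T]) (by linarith)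
        linarith
      · field_simp
    have hkey := hmono2 Set.self_mem_Ici ht'1 ht'1
    simp only at hkey
    linarith [hkey, ht'2, hΦ0 t']
  -- a sequence of times along which L (β ·) → 0
  have hseq : ∀ k : ℕ, ∃ t, (k:ℝ) ≤ t ∧ L (β t) < 1/((k:ℝ)+1) :=
    fun k => hsmall (1/((k:ℝ)+1)) (by positivity) k (Nat.cast_nonneg k)
  choose u hu1 hu2 using hseq
  have hu0 : ∀ k : ℕ, (0:ℝ) ≤ u k := fun k => le_trans (Nat.cast_nonneg k) (hu1 k)
  -- boundedness of the trajectory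
  have hC0nn : 0 ≤ Ψ bstar - Ψ β₀ - ⟪gradient Ψ β₀, bstar - β₀⟫ := by
    have := hbreg β₀ bstar
    linarith
  have hbd : ∀ t : ℝ, 0 ≤ t →
      ‖bstar - β t‖^2 ≤ 2/μ * (Ψ bstar - Ψ β₀ - ⟪gradient Ψ β₀, bstar - β₀⟫) := by
    intro t ht
    have h1 := hPhiMono bstar hbs' (Set.self_mem_Ici) ht ht
    simp only at h1
    rw [hβ0] at h1
    have h2 := hstrongineq (β t) bstar
    have h4 : μ/2 * ‖bstar - β t‖^2 ≤ Ψ bstar - Ψ β₀ - ⟪gradient Ψ β₀, bstar - β₀⟫ := by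
      linarith [h2, h1]
    have h5 : ‖bstar - β t‖^2 = 2/μ * (μ/2 * ‖bstar - β t‖^2) := by
      field_simp
    rw [h5]
    exact mul_le_mul_of_nonneg_left h4 (by positivity)
  have hmem : ∀ k : ℕ, β (u k) ∈ Metric.closedBall bstar (Real.sqrt (2/μ * (Ψ bstar - Ψ β₀ - ⟪gradient Ψ β₀, bstar - β₀⟫))) := by
    intro k
    rw [Metric.mem_closedBall, dist_eq_norm, ← norm_sub_rev]
    have h1 := hbd (u k) (hu0 k)
    have h2 : 0 ≤ ‖bstar - β (u k)‖ := norm_nonneg _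
    have hnn2 : (0:ℝ) ≤ 2/μ * (Ψ bstar - Ψ β₀ - ⟪gradient Ψ β₀, bstar - β₀⟫) := by
      have : (0:ℝ) ≤ 2/μ := by positivity
      exact mul_nonneg this hC0nn
    nlinarith [Real.sq_sqrt hnn2,
      Real.sqrt_nonneg (2/μ * (Ψ bstar - Ψ β₀ - ⟪gradient Ψ β₀, bstar - β₀⟫))]
  obtain ⟨βinf, -, φ, hφ, htend⟩ :=
    tendsto_subseq_of_bounded Metric.isBounded_closedBall hmem
  -- βinf interpolates
  have hLtend : Filter.Tendsto (fun k => L (β (u (φ k)))) Filter.atTop (nhds 0) := by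
    refine squeeze_zero (fun k => hLnonneg _) (fun k => ?_) tendsto_one_div_add_atTop_nhds_zero_nat
    refine le_trans (le_of_lt (hu2 (φ k))) ?_
    have h1 : (k:ℝ) + 1 ≤ (φ k : ℝ) + 1 := by
      have h0 : k ≤ φ k := hφ.le_apply
      exact_mod_cast Nat.add_le_add_right h0 1
    exact one_div_le_one_div_of_le (by positivity) h1
  have hLβinf : L βinf = 0 := by
    have h1 : Filter.Tendsto (fun k => L (β (u (φ k)))) Filter.atTop (nhds (L βinf)) :=
      (hLcont.tendsto βinf).comp htend
    exact tendsto_nhds_unique h1 hLtend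
  have hXβinf : X.mulVec βinf = y := by
    have h0 : ∑ i, (X.mulVec βinf i - y i)^2 = 0 := by
      rw [hLdef] at hLβinf
      rcases mul_eq_zero.mp hLβinf with h | h
      · exfalso
        have : (0:ℝ) < 1 / (4*(n:ℝ)) := by positivity
        linarith [this, h.symm.le]
      · exact h
    funext i
    have h1 := (Finset.sum_eq_zero_iff_of_nonneg (fun i _ => sq_nonneg _)).mp h0 i
      (Finset.mem_univ i)
    have h2 : X.mulVec βinf i - y i = 0 :=
      (pow_eq_zero_iff (by norm_num : (2:ℕ) ≠ 0)).mp h1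
    linarith [h2]
  -- the Lyapunov function with base point βinf tends to 0
  have hΦinf0 : Filter.Tendsto (fun k => Ψ βinf - Ψ (β (u (φ k)))
      - ⟪gradient Ψ (β (u (φ k))), βinf - β (u (φ k))⟫) Filter.atTop (nhds 0) := by
    have hFc : Continuous (fun x : EuclideanSpace ℝ (Fin d) =>
        Ψ βinf - Ψ x - ⟪gradient Ψ x, βinf - x⟫) := by
      exact (continuous_const.sub hΨ1.continuous).sub
        (hgcont.inner (continuous_const.sub continuous_id))
    have h1 := (hFc.tendsto βinf).comp htend
    simp only [sub_self, inner_zero_right] at h1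
    exact h1
  have hΦto0 : Filter.Tendsto (fun t => Ψ βinf - Ψ (β t)
      - ⟪gradient Ψ (β t), βinf - β t⟫) Filter.atTop (nhds 0) := by
    rw [Metric.tendsto_atTop]
    intro ε hε
    obtain ⟨k, hk⟩ := (hΦinf0.eventually_lt_const hε).exists
    refine ⟨u (φ k), fun t ht => ?_⟩
    have ht0 : (0:ℝ) ≤ t := le_trans (hu0 (φ k)) ht
    have h2 := hPhiMono βinf hXβinf (hu0 (φ k)) ht0 ht
    simp only at h2
    have h3 : 0 ≤ Ψ βinf - Ψ (β t) - ⟪gradient Ψ (β t), βinf - β t⟫ := by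
      linarith [hbreg (β t) βinf]
    rw [Real.dist_0_eq_abs, abs_of_nonneg h3]
    linarith
  -- convergence of the trajectory
  have hβconv : Filter.Tendsto β Filter.atTop (nhds βinf) := by
    rw [tendsto_iff_dist_tendsto_zero]
    have hsq : Filter.Tendsto (fun t => dist (β t) βinf ^ 2) Filter.atTop (nhds 0) := by
      have hup : Filter.Tendsto (fun t => 2/μ * (Ψ βinf - Ψ (β t)
          - ⟪gradient Ψ (β t), βinf - β t⟫)) Filter.atTop (nhds 0) := by
        have := hΦto0.const_mul (2/μ)
        simpa using this
      refine squeeze_zero (fun t => sq_nonneg _) (fun t => ?_) hup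
      have h2 := hstrongineq (β t) βinf
      have h6 : dist (β t) βinf ^ 2 = ‖βinf - β t‖ ^ 2 := by
        rw [dist_eq_norm, ← norm_sub_rev]
      rw [h6]
      have h5 : ‖βinf - β t‖^2 = 2/μ * (μ/2 * ‖βinf - β t‖^2) := by
        field_simp
      rw [h5]
      refine mul_le_mul_of_nonneg_left ?_ (by positivity)
      linarith
    have h7 := (Real.continuous_sqrt.tendsto' 0 0 (by simp)).comp hsq
    have heq : (fun t => Real.sqrt (dist (β t) βinf ^ 2)) = fun t => dist (β t) βinf :=
      funext fun t => Real.sqrt_sq dist_nonneg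
    rw [show ((fun t => Real.sqrt (dist (β t) βinf ^ 2)) : ℝ → ℝ)
        = (Real.sqrt ∘ fun t => dist (β t) βinf ^ 2) from rfl] at heq
    rw [← heq]
    exact h7
  -- gradient difference is orthogonal to the kernel of X
  have hker : ∀ v : EuclideanSpace ℝ (Fin d), X.mulVec v = 0 →
      ⟪gradient Ψ βinf - gradient Ψ β₀, v⟫ = 0 := by
    intro v hv
    have hconst : ∀ t : ℝ, 0 ≤ t → ⟪gradient Ψ (β t), v⟫ = ⟪gradient Ψ (β 0), v⟫ := by
      intro t ht
      rcases eq_or_lt_of_le ht with h | h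
      · rw [← h]
      · have hder : ∀ x ∈ Set.Ico (0:ℝ) t,
            HasDerivWithinAt (fun s => ⟪gradient Ψ (β s), v⟫) 0 (Set.Ici x) x := by
          intro x hx
          have h1 := (hflow x hx.1).inner ℝ
            (hasDerivWithinAt_const x (Set.Ici (0:ℝ)) v)
          have h2 : (⟪gradient Ψ (β x), (0:EuclideanSpace ℝ (Fin d))⟫
              + ⟪-(gradient L (β x)), v⟫) = 0 := by
            rw [inner_zero_right, inner_neg_left, hLker v hv (β x)]
            ring
          rw [h2] at h1
          exact h1.mono (Set.Ici_subset_Ici.mpr hx.1)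
        have hcont2 : ContinuousOn (fun s => ⟪gradient Ψ (β s), v⟫) (Set.Icc 0 t) := by
          refine ContinuousOn.inner ((hgcont.comp_continuousOn (hcont.mono ?_))) continuousOn_const
          exact fun z hz => hz.1
        exact constant_of_has_deriv_right_zero hcont2 hder t ⟨ht, le_rfl⟩
    have hlim1 : Filter.Tendsto (fun t => ⟪gradient Ψ (β t), v⟫) Filter.atTop
        (nhds ⟪gradient Ψ βinf, v⟫) := by
      have hc : Continuous (fun x : EuclideanSpace ℝ (Fin d) => ⟪gradient Ψ x, v⟫) :=
        hgcont.inner continuous_const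
      exact (hc.tendsto βinf).comp hβconv
    have hlim2 : Filter.Tendsto (fun t : ℝ => ⟪gradient Ψ (β t), v⟫) Filter.atTop
        (nhds ⟪gradient Ψ (β 0), v⟫) := by
      refine Filter.Tendsto.congr' ?_ tendsto_const_nhds
      exact (Filter.eventually_ge_atTop (0:ℝ)).mono fun t ht => (hconst t ht).symm
    have heq2 := tendsto_nhds_unique hlim1 hlim2
    rw [inner_sub_left, ← hβ0]
    linarith [heq2]
  -- conclusion
  refine ⟨βinf, hβconv, hXβinf, ?_⟩
  intro b hb
  have h1 := hbreg βinf b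
  have h2 : ⟪gradient Ψ βinf - gradient Ψ β₀, b - βinf⟫ = 0 := by
    apply hker
    have h3 : F (b - βinf) = F b - F βinf := map_sub F b βinf
    funext i
    rw [← hFapply, h3, hsub, hFapply, hFapply, hb, hXβinf]
    simp
  have h4 : ⟪gradient Ψ β₀, b - β₀⟫ - ⟪gradient Ψ β₀, βinf - β₀⟫
      = ⟪gradient Ψ β₀, b - βinf⟫ := by
    simp only [inner_sub_right]
    ring
  have h5 : ⟪gradient Ψ βinf, b - βinf⟫ = ⟪gradient Ψ β₀, b - βinf⟫ := by
    rw [inner_sub_left] at h2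
    linarith
  linarith [h1, h4, h5]
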